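/- For every list N of natural numbers and all functions v, w : ℕ → ℕ, the square matrix σ(N,v,w) = (σ_f^N | σ_g^N) over F₂ is a permutation matrix: every row and every column of σ(N,v,w) contains exactly one nonzero entry, and that entry equals 1. -/

import Mathlib

open Matrix

/-- `rowSize v w N = Σᵢ (v nᵢ + w nᵢ)`, the common row size `v(N) + w(N)` of the
matrices `σ_f^N`, `σ_g^N`, with rows in the interleaved order
(`v`-block of `n₁`, `w`-block of `n₁`, `v`-block of `n₂`, …). -/
def rowSize (v w : ℕ → ℕ) : List ℕ → ℕ
  | [] => 0
  | n :: N => (v n + w n) + rowSize v w N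

/-- `colSize v N = Σᵢ v(nᵢ) = v(N)`. -/
def colSize (v : ℕ → ℕ) : List ℕ → ℕ
  | [] => 0
  | n :: N => v n + colSize v N

/-- The matrix `σ_f^N` over `F₂ = ZMod 2`: `σ_f^{[]}` is the empty matrix and
`σ_f^{n::N'}` is the block matrix `[[I_{v(n)}, 0], [0, 0], [0, σ_f^{N'}]]`. -/
def sigmaF (v w : ℕ → ℕ) : (N : List ℕ) →
    Matrix (Fin (rowSize v w N)) (Fin (colSize v N)) (ZMod 2)
  | [] => 0
  | n :: N =>
    Matrix.reindex finSumFinEquiv finSumFinEquiv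
      (Matrix.fromBlocks
        (Matrix.reindex finSumFinEquiv (Equiv.refl (Fin (v n)))
          (Matrix.fromRows
            (1 : Matrix (Fin (v n)) (Fin (v n)) (ZMod 2))
            (0 : Matrix (Fin (w n)) (Fin (v n)) (ZMod 2))))
        0 0 (sigmaF v w N))

/-- The matrix `σ_g^N` over `F₂ = ZMod 2`: `σ_g^{[]}` is the empty matrix and
`σ_g^{n::N'}` is the block matrix `[[0, 0], [I_{w(n)}, 0], [0, σ_g^{N'}]]`. -/
def sigmaG (v w : ℕ → ℕ) : (N : List ℕ) →
    Matrix (Fin (rowSize v w N)) (Fin (colSize w N)) (ZMod 2)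
  | [] => 0
  | n :: N =>
    Matrix.reindex finSumFinEquiv finSumFinEquiv
      (Matrix.fromBlocks
        (Matrix.reindex finSumFinEquiv (Equiv.refl (Fin (w n)))
          (Matrix.fromRows
            (0 : Matrix (Fin (v n)) (Fin (w n)) (ZMod 2))
            (1 : Matrix (Fin (w n)) (Fin (w n)) (ZMod 2))))
        0 0 (sigmaG v w N))

/-- `σ(N,v,w) = (σ_f^N | σ_g^N)`, the square matrix of size `v(N) + w(N)` obtained by
placing `σ_f^N` and `σ_g^N` side by side. -/
def sigma' (v w : ℕ → ℕ) (N : List ℕ) :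
    Matrix (Fin (rowSize v w N)) (Fin (colSize v N + colSize w N)) (ZMod 2) :=
  Matrix.reindex (Equiv.refl _) finSumFinEquiv
    (Matrix.fromCols (sigmaF v w N) (sigmaG v w N))

set_option maxHeartbeats 1000000 in
lemma sigma_step (vn wn R C D : ℕ)
    (F : Matrix (Fin R) (Fin C) (ZMod 2)) (G : Matrix (Fin R) (Fin D) (ZMod 2))
    (e' : Fin R ≃ Fin (C + D))
    (hF : ∀ r c, F r c = if finSumFinEquiv (Sum.inl c) = e' r then 1 else 0)
    (hG : ∀ r c, G r c = if finSumFinEquiv (Sum.inr c) = e' r then 1 else 0) :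
    ∃ e : Fin ((vn + wn) + R) ≃ Fin ((vn + C) + (wn + D)), ∀ i j,
      (Matrix.reindex (Equiv.refl _) finSumFinEquiv
        (Matrix.fromCols
          (Matrix.reindex finSumFinEquiv finSumFinEquiv
            (Matrix.fromBlocks
              (Matrix.reindex finSumFinEquiv (Equiv.refl (Fin vn))
                (Matrix.fromRows (1 : Matrix (Fin vn) (Fin vn) (ZMod 2))
                  (0 : Matrix (Fin wn) (Fin vn) (ZMod 2)))) 0 0 F))
          (Matrix.reindex finSumFinEquiv finSumFinEquiv
            (Matrix.fromBlocks
              (Matrix.reindex finSumFinEquiv (Equiv.refl (Fin wn))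
                (Matrix.fromRows (0 : Matrix (Fin vn) (Fin wn) (ZMod 2))
                  (1 : Matrix (Fin wn) (Fin wn) (ZMod 2)))) 0 0 G)))) i j
        = if j = e i then 1 else 0 := by
  refine ⟨(finSumFinEquiv.symm.trans <|
      (Equiv.sumCongr finSumFinEquiv.symm (e'.trans finSumFinEquiv.symm)).trans <|
      (Equiv.sumSumSumComm (Fin vn) (Fin wn) (Fin C) (Fin D)).trans <|
      (Equiv.sumCongr finSumFinEquiv finSumFinEquiv).trans finSumFinEquiv), ?_⟩
  intro i j
  obtain ⟨i, rfl⟩ := finSumFinEquiv.surjective i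
  obtain ⟨j, rfl⟩ := finSumFinEquiv.surjective j
  rcases j with jv | jw
  · obtain ⟨jv, rfl⟩ := finSumFinEquiv.surjective jv
    rcases i with i1 | i2
    · obtain ⟨i1, rfl⟩ := finSumFinEquiv.surjective i1
      rcases jv with j1 | j2 <;> rcases i1 with a | b <;>
        simp [Matrix.one_apply, Equiv.sumSumSumComm, eq_comm,
          -finSumFinEquiv_apply_left, -finSumFinEquiv_apply_right]
    · obtain ⟨t, ht⟩ : ∃ t, finSumFinEquiv t = e' i2 :=
        ⟨finSumFinEquiv.symm (e' i2), Equiv.apply_symm_apply _ _⟩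
      rcases jv with j1 | j2 <;> rcases t with x | y <;>
        simp [hF, ← ht, Equiv.sumSumSumComm, eq_comm,
          -finSumFinEquiv_apply_left, -finSumFinEquiv_apply_right]
  · obtain ⟨jw, rfl⟩ := finSumFinEquiv.surjective jw
    rcases i with i1 | i2
    · obtain ⟨i1, rfl⟩ := finSumFinEquiv.surjective i1
      rcases jw with j1 | j2 <;> rcases i1 with a | b <;>
        simp [Matrix.one_apply, Equiv.sumSumSumComm, eq_comm,
          -finSumFinEquiv_apply_left, -finSumFinEquiv_apply_right]
    · obtain ⟨t, ht⟩ : ∃ t, finSumFinEquiv t = e' i2 :=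
        ⟨finSumFinEquiv.symm (e' i2), Equiv.apply_symm_apply _ _⟩
      rcases jw with j1 | j2 <;> rcases t with x | y <;>
        simp [hG, ← ht, Equiv.sumSumSumComm, eq_comm,
          -finSumFinEquiv_apply_left, -finSumFinEquiv_apply_right]

lemma sigma'_exists_equiv (v w : ℕ → ℕ) : ∀ N : List ℕ,
    ∃ e : Fin (rowSize v w N) ≃ Fin (colSize v N + colSize w N),
      ∀ i j, sigma' v w N i j = if j = e i then 1 else 0
  | [] => ⟨finCongr rfl, fun i => i.elim0⟩
  | n :: N => by
    obtain ⟨e', he'⟩ := sigma'_exists_equiv v w N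
    have hF : ∀ r c, sigmaF v w N r c =
        if finSumFinEquiv (Sum.inl c) = e' r then 1 else 0 := by
      intro r c
      rw [← he']
      simp [sigma', -finSumFinEquiv_apply_left, -finSumFinEquiv_apply_right]
    have hG : ∀ r c, sigmaG v w N r c =
        if finSumFinEquiv (Sum.inr c) = e' r then 1 else 0 := by
      intro r c
      rw [← he']
      simp [sigma', -finSumFinEquiv_apply_left, -finSumFinEquiv_apply_right]
    obtain ⟨e, he⟩ := sigma_step (v n) (w n) (rowSize v w N) (colSize v N) (colSize w N)
      (sigmaF v w N) (sigmaG v w N) e' hF hG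
    exact ⟨e, he⟩

/-- `σ(N,v,w)` is a permutation matrix: every row and every column contains exactly one
nonzero entry, and every nonzero entry equals `1`. -/
theorem sigma'_isPermutationMatrix (v w : ℕ → ℕ) (N : List ℕ) :
    (∀ i, ∃! j, sigma' v w N i j ≠ 0) ∧
    (∀ j, ∃! i, sigma' v w N i j ≠ 0) ∧
    (∀ i j, sigma' v w N i j ≠ 0 → sigma' v w N i j = 1) := by
  obtain ⟨e, he⟩ := sigma'_exists_equiv v w N
  refine ⟨fun i => ⟨e i, by simp [he], fun j hj => ?_⟩,
    fun j => ⟨e.symm j, by simp [he], fun i hi => ?_⟩,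
    fun i j hij => ?_⟩
  · by_contra h
    exact hj (by rw [he, if_neg h])
  · by_contra h
    refine hi ?_
    rw [he, if_neg]
    intro hh
    exact h (by rw [hh, Equiv.symm_apply_apply])
  · rw [he] at hij ⊢
    by_cases h : j = e i
    · simp [h]
    · simp [h] at hij
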